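/- Let {Y(t)} be a gamma subordinator, 0 < β < 1, and s > 0 fixed. Then lim_{t→∞} β E[Y(t)^{2β} B(β, 1+β; Y(s)/Y(t))] / E[Y(s)^β Y(t)^β] = 1. -/

import Mathlib

open Real MeasureTheory ProbabilityTheory Filter

noncomputable def incBeta (a b x : ℝ) : ℝ :=
  ∫ u in (0:ℝ)..x, u ^ (a - 1) * (1 - u) ^ (b - 1)

section IncBeta

variable {β : ℝ} (hβ0 : 0 < β) (hβ1 : β < 1)

lemma incBeta_def (x : ℝ) :
    incBeta β (1 + β) x = ∫ u in (0:ℝ)..x, u ^ (β - 1) * (1 - u) ^ β := by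
  simp [incBeta]

include hβ0 in
lemma intervalIntegrable_incBeta_integrand {x : ℝ} (hx0 : 0 ≤ x) (hx1 : x ≤ 1) :
    IntervalIntegrable (fun u : ℝ => u ^ (β - 1) * (1 - u) ^ β) volume 0 x := by
  refine (intervalIntegral.intervalIntegrable_rpow' (r := β - 1) (by linarith)
      (a := 0) (b := x)).mono_fun
    ?_ ?_
  · exact ((measurable_id'.pow_const _).mul
      ((measurable_const.sub measurable_id').pow_const _)).aestronglyMeasurable
  · rw [Set.uIoc_of_le hx0]
    filter_upwards [ae_restrict_mem measurableSet_Ioc] with u hu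
    have hu0 : 0 < u := hu.1
    have hu1 : u ≤ 1 := hu.2.trans hx1
    have h1 : (0:ℝ) ≤ 1 - u := by linarith
    rw [Real.norm_eq_abs, Real.norm_eq_abs, abs_of_nonneg (rpow_nonneg hu0.le _),
      abs_of_nonneg (mul_nonneg (rpow_nonneg hu0.le _) (rpow_nonneg h1 _))]
    calc u ^ (β - 1) * (1 - u) ^ β ≤ u ^ (β - 1) * 1 := by
          refine mul_le_mul_of_nonneg_left ?_ (rpow_nonneg hu0.le _)
          calc (1 - u) ^ β ≤ 1 ^ β := by
                exact rpow_le_rpow h1 (by linarith) (by linarith)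
            _ = 1 := one_rpow β
      _ = u ^ (β - 1) := mul_one _

include hβ0 hβ1 in
lemma incBeta_le {x : ℝ} (hx0 : 0 ≤ x) (hx1 : x ≤ 1) :
    incBeta β (1 + β) x ≤ x ^ β / β := by
  rw [incBeta_def]
  have h : (∫ u in (0:ℝ)..x, u ^ (β - 1) * (1 - u) ^ β) ≤ ∫ u in (0:ℝ)..x, u ^ (β - 1) := by
    refine intervalIntegral.integral_mono_on hx0
      (intervalIntegrable_incBeta_integrand hβ0 hx0 hx1)
      (intervalIntegral.intervalIntegrable_rpow' (by linarith)) (fun u hu => ?_)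
    rcases eq_or_lt_of_le hu.1 with h0 | h0
    · rw [← h0]
      simp [zero_rpow (show β - 1 ≠ 0 by linarith)]
    · nth_rewrite 2 [← mul_one (u ^ (β - 1))]
      refine mul_le_mul_of_nonneg_left ?_ (rpow_nonneg h0.le _)
      calc (1 - u) ^ β ≤ 1 ^ β :=
            rpow_le_rpow (by linarith [hu.2.trans hx1]) (by linarith [hu.2.trans hx1]) hβ0.le
        _ = 1 := one_rpow β
  refine h.trans_eq ?_
  rw [integral_rpow (Or.inl (by linarith))]
  rw [zero_rpow (by linarith : β - 1 + 1 ≠ 0)]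
  ring_nf

include hβ0 hβ1 in
lemma le_incBeta {x : ℝ} (hx0 : 0 ≤ x) (hx1 : x ≤ 1) :
    x ^ β / β - x ^ (2 * β) / (2 * β) ≤ incBeta β (1 + β) x := by
  rw [incBeta_def]
  have h : (∫ u in (0:ℝ)..x, (u ^ (β - 1) - u ^ (2 * β - 1))) ≤
      ∫ u in (0:ℝ)..x, u ^ (β - 1) * (1 - u) ^ β := by
    refine intervalIntegral.integral_mono_on hx0
      ((intervalIntegral.intervalIntegrable_rpow' (by linarith)).sub
        (intervalIntegral.intervalIntegrable_rpow' (by linarith)))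
      (intervalIntegrable_incBeta_integrand hβ0 hx0 hx1) (fun u hu => ?_)
    rcases eq_or_lt_of_le hu.1 with h0 | h0
    · rw [← h0, zero_rpow (show β - 1 ≠ 0 by linarith)]
      have h2 : (0:ℝ) ≤ (0:ℝ) ^ (2 * β - 1) := rpow_nonneg le_rfl _
      have h3 : (0:ℝ) ≤ (0:ℝ) * ((1 - 0:ℝ)) ^ β := by
        simp
      linarith
    · have hu1 : u ≤ 1 := hu.2.trans hx1
      have key : 1 - u ^ β ≤ (1 - u) ^ β := by
        have h1 : u ≤ u ^ β := by
          nth_rewrite 1 [← rpow_one u]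
          exact rpow_le_rpow_of_exponent_ge h0 hu1 hβ1.le
        rcases eq_or_lt_of_le hu1 with h2 | h2
        · rw [h2]
          simp [zero_rpow hβ0.ne']
        · have h3 : 1 - u ≤ (1 - u) ^ β := by
            nth_rewrite 1 [← rpow_one (1 - u)]
            exact rpow_le_rpow_of_exponent_ge (by linarith) (by linarith) hβ1.le
          linarith
      calc u ^ (β - 1) - u ^ (2 * β - 1) = u ^ (β - 1) * (1 - u ^ β) := by
            rw [mul_sub, mul_one, ← rpow_add h0]
            ring_nf
        _ ≤ u ^ (β - 1) * (1 - u) ^ β :=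
            mul_le_mul_of_nonneg_left key (rpow_nonneg h0.le _)
  refine le_trans (le_of_eq ?_) h
  rw [intervalIntegral.integral_sub (intervalIntegral.intervalIntegrable_rpow' (by linarith))
    (intervalIntegral.intervalIntegrable_rpow' (by linarith)),
    integral_rpow (Or.inl (by linarith)), integral_rpow (Or.inl (by linarith)),
    zero_rpow (by linarith : β - 1 + 1 ≠ 0), zero_rpow (by linarith : 2 * β - 1 + 1 ≠ 0)]
  ring_nf

omit hβ0 in
include hβ0 in
lemma incBeta_nonneg {x : ℝ} (hx0 : 0 ≤ x) (hx1 : x ≤ 1) :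
    0 ≤ incBeta β (1 + β) x := by
  rw [incBeta_def]
  refine intervalIntegral.integral_nonneg hx0 (fun u hu => ?_)
  have hu1 : u ≤ 1 := hu.2.trans hx1
  exact mul_nonneg (rpow_nonneg hu.1 _) (rpow_nonneg (by linarith) _)

include hβ0 in
lemma continuousOn_incBeta : ContinuousOn (incBeta β (1 + β)) (Set.Icc 0 1) := by
  have hfun : incBeta β (1 + β) = fun x => ∫ u in (0:ℝ)..x, u ^ (β - 1) * (1 - u) ^ β :=
    funext incBeta_def
  rw [hfun]
  have h : IntervalIntegrable (fun u : ℝ => u ^ (β - 1) * (1 - u) ^ β) volume 0 1 :=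
    intervalIntegrable_incBeta_integrand hβ0 zero_le_one le_rfl
  have := intervalIntegral.continuousOn_primitive_interval' (μ := volume)
    (f := fun u : ℝ => u ^ (β - 1) * (1 - u) ^ β) (b₁ := 0) (b₂ := 1) (a := 0) h
    (by simp [Set.uIcc_of_le (zero_le_one' ℝ)])
  simpa [Set.uIcc_of_le (zero_le_one' ℝ)] using this

end IncBeta


section GammaAux

variable {a r q : ℝ}

lemma measurable_gammaPDF' (a r : ℝ) : Measurable (ProbabilityTheory.gammaPDF a r) :=
  (ProbabilityTheory.measurable_gammaPDFReal a r).ennreal_ofReal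

lemma gammaPDF_mul_rpow (ha : 0 < a) (hr : 0 < r) (hq : 0 < q) {x : ℝ} (hx : x ≠ 0) :
    gammaPDF a r x * ENNReal.ofReal (x ^ q) =
      ENNReal.ofReal (Gamma (a + q) / (Gamma a * r ^ q)) * gammaPDF (a + q) r x := by
  rcases lt_or_gt_of_ne hx with hneg | hpos
  · rw [gammaPDF_of_neg hneg, gammaPDF_of_neg hneg]
    simp
  · rw [gammaPDF_of_nonneg hpos.le, gammaPDF_of_nonneg hpos.le,
      ← ENNReal.ofReal_mul (by positivity), ← ENNReal.ofReal_mul (by positivity)]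
    congr 1
    have h1 : x ^ (a - 1) * x ^ q = x ^ (a + q - 1) := by
      rw [← rpow_add hpos]; ring_nf
    have h2 : r ^ (a + q) = r ^ a * r ^ q := rpow_add hr a q
    have hG : Gamma (a + q) ≠ 0 := (Gamma_pos_of_pos (by linarith)).ne'
    have hGa : Gamma a ≠ 0 := (Gamma_pos_of_pos ha).ne'
    have hrq : (0:ℝ) < r ^ q := rpow_pos_of_pos hr q
    rw [h2, ← h1]
    field_simp

lemma lintegral_rpow_gammaMeasure (ha : 0 < a) (hr : 0 < r) (hq : 0 < q) :
    ∫⁻ x, ENNReal.ofReal (x ^ q) ∂(gammaMeasure a r)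
      = ENNReal.ofReal (Gamma (a + q) / (Gamma a * r ^ q)) := by
  rw [gammaMeasure, lintegral_withDensity_eq_lintegral_mul _ (measurable_gammaPDF' a r)
    ((measurable_id'.pow_const q).ennreal_ofReal)]
  have h0 : ∀ᵐ (x : ℝ) ∂volume, x ≠ 0 := by
    rw [ae_iff]
    simpa [Set.setOf_eq_eq_singleton] using measure_singleton (0:ℝ)
  have := lintegral_congr_ae (μ := volume)
    (f := fun x => (gammaPDF a r * fun x => ENNReal.ofReal (x ^ q)) x)
    (g := fun x => ENNReal.ofReal (Gamma (a + q) / (Gamma a * r ^ q)) * gammaPDF (a + q) r x)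
    (by filter_upwards [h0] with x hx; exact gammaPDF_mul_rpow ha hr hq hx)
  rw [this, lintegral_const_mul _ (measurable_gammaPDF' (a + q) r),
    lintegral_gammaPDF_eq_one (by linarith) hr, mul_one]

lemma gammaMeasure_ae_pos (ha : 0 < a) (hr : 0 < r) :
    ∀ᵐ x ∂(gammaMeasure a r), 0 < x := by
  rw [ae_iff]
  have hset : {x : ℝ | ¬ 0 < x} = Set.Iic 0 := by ext x; simp
  rw [hset, gammaMeasure, withDensity_apply _ measurableSet_Iic,
    show (volume.restrict (Set.Iic (0:ℝ))) = volume.restrict (Set.Iio 0) from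
      (Measure.restrict_congr_set Iio_ae_eq_Iic).symm]
  exact lintegral_gammaPDF_of_nonpos le_rfl

lemma integrable_rpow_gammaMeasure (ha : 0 < a) (hr : 0 < r) (hq : 0 < q) :
    Integrable (fun x : ℝ => x ^ q) (gammaMeasure a r) := by
  refine ⟨(measurable_id'.pow_const q).aestronglyMeasurable, ?_⟩
  rw [hasFiniteIntegral_iff_ofReal ?_]
  · rw [lintegral_rpow_gammaMeasure ha hr hq]
    exact ENNReal.ofReal_lt_top
  · filter_upwards [gammaMeasure_ae_pos ha hr] with x hx
    exact rpow_nonneg hx.le q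

lemma integral_rpow_gammaMeasure (ha : 0 < a) (hr : 0 < r) (hq : 0 < q) :
    ∫ x, x ^ q ∂(gammaMeasure a r) = Gamma (a + q) / (Gamma a * r ^ q) := by
  rw [integral_eq_lintegral_of_nonneg_ae
      (by filter_upwards [gammaMeasure_ae_pos ha hr] with x hx; exact rpow_nonneg hx.le q)
      (measurable_id'.pow_const q).aestronglyMeasurable,
    lintegral_rpow_gammaMeasure ha hr hq, ENNReal.toReal_ofReal]
  have h1 : 0 < Gamma (a + q) := Gamma_pos_of_pos (by linarith)
  have h2 : 0 < Gamma a := Gamma_pos_of_pos ha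
  have h3 : (0:ℝ) < r ^ q := rpow_pos_of_pos hr q
  positivity

lemma integral_rpow_gammaMeasure_pos (ha : 0 < a) (hr : 0 < r) (hq : 0 < q) :
    0 < ∫ x, x ^ q ∂(gammaMeasure a r) := by
  rw [integral_rpow_gammaMeasure ha hr hq]
  have h1 : 0 < Gamma (a + q) := Gamma_pos_of_pos (by linarith)
  have h2 : 0 < Gamma a := Gamma_pos_of_pos ha
  have h3 : (0:ℝ) < r ^ q := rpow_pos_of_pos hr q
  positivity

lemma gamma_moment_lb {β : ℝ} (hβ0 : 0 < β) (hr : 0 < r) (ha : 16 ≤ a) :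
    (a / (2 * r)) ^ β / 2 ≤ ∫ x, x ^ β ∂(gammaMeasure a r) := by
  have ha0 : 0 < a := by linarith
  haveI := isProbabilityMeasure_gammaMeasure ha0 hr
  set ν := gammaMeasure a r with hν
  set m := a / (2 * r) with hm
  have hm0 : 0 < m := by positivity
  have hGa : Gamma a ≠ 0 := (Gamma_pos_of_pos ha0).ne'
  have hmean : ∫ x, x ∂ν = a / r := by
    have h1 : ∫ x, x ∂ν = ∫ x, x ^ (1:ℝ) ∂ν := by
      refine integral_congr_ae ?_
      filter_upwards [gammaMeasure_ae_pos ha0 hr] with x _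
      rw [rpow_one]
    rw [h1, integral_rpow_gammaMeasure ha0 hr one_pos, Gamma_add_one ha0.ne', rpow_one]
    field_simp
  have hsq : ∫ x, x ^ 2 ∂ν = a * (a + 1) / r ^ 2 := by
    have h1 : ∫ x, x ^ 2 ∂ν = ∫ x, x ^ (2:ℝ) ∂ν := by
      refine integral_congr_ae ?_
      filter_upwards [gammaMeasure_ae_pos ha0 hr] with x _
      rw [show ((2:ℝ)) = ((2:ℕ):ℝ) by norm_num, rpow_natCast]
    rw [h1, integral_rpow_gammaMeasure ha0 hr two_pos,
      show a + 2 = (a + 1) + 1 by ring, Gamma_add_one (by positivity),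
      Gamma_add_one ha0.ne', show ((2:ℝ)) = ((2:ℕ):ℝ) by norm_num, rpow_natCast]
    field_simp
  have hmem : MemLp (fun x : ℝ => x) 2 ν := by
    refine (memLp_two_iff_integrable_sq measurable_id'.aestronglyMeasurable).mpr ?_
    refine (integrable_rpow_gammaMeasure ha0 hr two_pos).congr ?_
    filter_upwards [gammaMeasure_ae_pos ha0 hr] with x _
    rw [show ((2:ℝ)) = ((2:ℕ):ℝ) by norm_num, rpow_natCast]
  have hvar : variance (fun x : ℝ => x) ν = a / r ^ 2 := by
    rw [variance_eq_sub hmem]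
    simp only [Pi.pow_apply]
    rw [hsq, hmean]
    field_simp
    ring
  have hcheb := meas_ge_le_variance_div_sq (μ := ν) hmem (c := m) hm0
  rw [hvar, hmean] at hcheb
  have hvc : a / r ^ 2 / m ^ 2 = 4 / a := by
    rw [hm]
    field_simp
    ring
  rw [hvc] at hcheb
  -- Iio m ⊆ the Chebyshev set
  have hsub : Set.Iio m ⊆ {x : ℝ | m ≤ |x - a / r|} := by
    intro x hx
    simp only [Set.mem_Iio] at hx
    simp only [Set.mem_setOf_eq]
    have : a / r - x > m := by
      have : a / r = 2 * m := by rw [hm]; field_simp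
      linarith
    rw [abs_sub_comm, abs_of_pos (by linarith)]
    linarith
  have hIio : ν (Set.Iio m) ≤ ENNReal.ofReal (4 / a) :=
    le_trans (measure_mono hsub) hcheb
  have hIci : (1:ℝ) - 4 / a ≤ (ν (Set.Ici m)).toReal := by
    have hunion : ν (Set.Iio m) + ν (Set.Ici m) = 1 := by
      rw [← measure_union (Set.Iio_disjoint_Ici le_rfl) measurableSet_Ici,
        Set.Iio_union_Ici, measure_univ]
    have hfin1 : ν (Set.Iio m) ≠ ⊤ := (measure_lt_top ν _).ne
    have hfin2 : ν (Set.Ici m) ≠ ⊤ := (measure_lt_top ν _).ne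
    have htr : (ν (Set.Iio m)).toReal + (ν (Set.Ici m)).toReal = 1 := by
      rw [← ENNReal.toReal_add hfin1 hfin2, hunion, ENNReal.toReal_one]
    have h4 : (ν (Set.Iio m)).toReal ≤ 4 / a := by
      refine le_trans (ENNReal.toReal_mono ENNReal.ofReal_ne_top hIio) ?_
      rw [ENNReal.toReal_ofReal (by positivity)]
    linarith
  have hhalf : (1:ℝ) / 2 ≤ (ν (Set.Ici m)).toReal := by
    have : 4 / a ≤ 1 / 2 := by
      rw [div_le_div_iff₀ ha0 (by norm_num)]
      linarith
    linarith
  have hint : Integrable (fun x : ℝ => x ^ β) ν := integrable_rpow_gammaMeasure ha0 hr hβ0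
  calc m ^ β / 2 = (1 / 2) * m ^ β := by ring
    _ ≤ (ν (Set.Ici m)).toReal * m ^ β := by
        exact mul_le_mul_of_nonneg_right hhalf (rpow_nonneg hm0.le β)
    _ = ∫ _ in Set.Ici m, m ^ β ∂ν := by rw [setIntegral_const, smul_eq_mul]; rfl
    _ ≤ ∫ x in Set.Ici m, x ^ β ∂ν := by
        refine setIntegral_mono_on ((integrableOn_const_iff enorm_ne_top).mpr ?_) (hint.integrableOn)
          measurableSet_Ici (fun x hx => ?_)
        · right; exact measure_lt_top ν _
        · exact rpow_le_rpow hm0.le hx hβ0.le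
    _ ≤ ∫ x, x ^ β ∂ν := by
        refine setIntegral_le_integral hint ?_
        filter_upwards [gammaMeasure_ae_pos ha0 hr] with x hx
        exact rpow_nonneg hx.le β

end GammaAux


section KeyPointwise

lemma key_pointwise {β : ℝ} (hβ0 : 0 < β) (hβ1 : β < 1) {x y : ℝ} (hx : 0 < x) (hxy : x ≤ y) :
    x ^ β * y ^ β - x ^ (2 * β) / 2 ≤ β * (y ^ (2 * β) * incBeta β (1 + β) (x / y)) ∧
      β * (y ^ (2 * β) * incBeta β (1 + β) (x / y)) ≤ x ^ β * y ^ β := by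
  have hy : 0 < y := lt_of_lt_of_le hx hxy
  have hr0 : 0 ≤ x / y := by positivity
  have hr1 : x / y ≤ 1 := (div_le_one hy).mpr hxy
  have hy2β : y ^ (2 * β) = y ^ β * y ^ β := by rw [← rpow_add hy]; ring_nf
  have hdivβ : (x / y) ^ β = x ^ β / y ^ β := by rw [div_rpow hx.le hy.le]
  have hdiv2β : (x / y) ^ (2 * β) = x ^ (2 * β) / y ^ (2 * β) := by rw [div_rpow hx.le hy.le]
  have hyβ : (0:ℝ) < y ^ β := rpow_pos_of_pos hy β
  have hy2β' : (0:ℝ) < y ^ (2 * β) := rpow_pos_of_pos hy _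
  constructor
  · have h := le_incBeta hβ0 hβ1 hr0 hr1
    have h2 : β * (y ^ (2 * β) * ((x / y) ^ β / β - (x / y) ^ (2 * β) / (2 * β))) =
        x ^ β * y ^ β - x ^ (2 * β) / 2 := by
      rw [hdivβ, hdiv2β, hy2β]
      field_simp
    calc x ^ β * y ^ β - x ^ (2 * β) / 2
        = β * (y ^ (2 * β) * ((x / y) ^ β / β - (x / y) ^ (2 * β) / (2 * β))) := h2.symm
      _ ≤ β * (y ^ (2 * β) * incBeta β (1 + β) (x / y)) :=
          mul_le_mul_of_nonneg_left (mul_le_mul_of_nonneg_left h hy2β'.le) hβ0.le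
  · have h := incBeta_le hβ0 hβ1 hr0 hr1
    have h2 : β * (y ^ (2 * β) * ((x / y) ^ β / β)) = x ^ β * y ^ β := by
      rw [hdivβ, hy2β]
      field_simp
    calc β * (y ^ (2 * β) * incBeta β (1 + β) (x / y))
        ≤ β * (y ^ (2 * β) * ((x / y) ^ β / β)) :=
          mul_le_mul_of_nonneg_left (mul_le_mul_of_nonneg_left h hy2β'.le) hβ0.le
      _ = x ^ β * y ^ β := h2

end KeyPointwise

theorem gamma_subordinator_incBeta_joint_asymp {Ω : Type*} [MeasurableSpace Ω]
    (μ : Measure Ω) [IsProbabilityMeasure μ] (Y : ℝ → Ω → ℝ) (α p β s : ℝ)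
    (hα : 0 < α) (hp : 0 < p) (hβ0 : 0 < β) (hβ1 : β < 1) (hs : 0 < s)
    (hmeas : ∀ u, Measurable (Y u))
    (h0 : ∀ᵐ ω ∂μ, Y 0 ω = 0)
    (hmono : ∀ᵐ ω ∂μ, Monotone fun u => Y u ω)
    (hindep : ∀ u v : ℝ, 0 ≤ u → u ≤ v →
      IndepFun (Y u) (fun ω => Y v ω - Y u ω) μ)
    (hstat : ∀ u v : ℝ, 0 ≤ u → u ≤ v →
      μ.map (fun ω => Y v ω - Y u ω) = μ.map (Y (v - u)))
    (hlaw : ∀ t : ℝ, 0 < t → μ.map (Y t) = gammaMeasure (p * t) α) :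
    Tendsto (fun t : ℝ =>
        β * (∫ ω, (Y t ω) ^ (2 * β) * incBeta β (1 + β) (Y s ω / Y t ω) ∂μ) /
          (∫ ω, (Y s ω) ^ β * (Y t ω) ^ β ∂μ))
      atTop (nhds 1) := by
  classical
  have h2β : 0 < 2 * β := by linarith
  -- a.e. positivity of Y t for t > 0
  have hYpos : ∀ t : ℝ, 0 < t → ∀ᵐ ω ∂μ, 0 < Y t ω := by
    intro t ht
    have h := gammaMeasure_ae_pos (mul_pos hp ht) hα
    rw [← hlaw t ht] at h
    exact (ae_map_iff (hmeas t).aemeasurable measurableSet_Ioi).mp h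
  -- integrability of powers of Y t
  have hint_rpow : ∀ t q : ℝ, 0 < t → 0 < q → Integrable (fun ω => Y t ω ^ q) μ := by
    intro t q ht hq
    have h := integrable_rpow_gammaMeasure (mul_pos hp ht) hα hq
    rw [← hlaw t ht] at h
    have := (integrable_map_measure ((measurable_id'.pow_const q).aestronglyMeasurable)
      (hmeas t).aemeasurable).mp h
    exact this
  -- integrals of powers
  have hEq_int : ∀ t q : ℝ, 0 < t → ∫ ω, Y t ω ^ q ∂μ = ∫ x, x ^ q ∂(gammaMeasure (p * t) α) := by
    intro t q ht
    rw [← hlaw t ht,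
      integral_map (hmeas t).aemeasurable ((measurable_id'.pow_const q).aestronglyMeasurable)]
  set C : ℝ := ∫ ω, Y s ω ^ (2 * β) ∂μ with hC
  set Es : ℝ := ∫ ω, Y s ω ^ β ∂μ with hEs
  have hEs_pos : 0 < Es := by
    rw [hEs, hEq_int s β hs]
    exact integral_rpow_gammaMeasure_pos (mul_pos hp hs) hα hβ0
  set D : ℝ → ℝ := fun t => ∫ ω, (Y s ω) ^ β * (Y t ω) ^ β ∂μ with hD
  set N : ℝ → ℝ := fun t => ∫ ω, (Y t ω) ^ (2 * β) * incBeta β (1 + β) (Y s ω / Y t ω) ∂μ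
    with hN
  -- the clamped continuous version of incBeta
  have hG_cont : Continuous (fun z : ℝ => incBeta β (1 + β) (max 0 (min 1 z))) := by
    refine (continuousOn_incBeta hβ0).comp_continuous
      (continuous_const.max (continuous_const.min continuous_id)) (fun z => ?_)
    exact ⟨le_max_left _ _, max_le zero_le_one (min_le_left _ _)⟩
  -- per-t facts for t ≥ s + 16 / p
  have h16p : 0 < 16 / p := by positivity
  have key : ∀ t : ℝ, s + 16 / p ≤ t →
      (0 < D t ∧ Es * ((p * (t - s) / (2 * α)) ^ β / 2) ≤ D t) ∧
        (D t - C / 2 ≤ β * N t ∧ β * N t ≤ D t) := by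
    intro t ht
    have hst : s < t := by linarith
    have ht0 : 0 < t := by linarith
    have hts : 0 < t - s := by linarith
    have ha16 : (16:ℝ) ≤ p * (t - s) := by
      rw [← div_le_iff₀' hp]
      linarith
    have hae : ∀ᵐ ω ∂μ, 0 < Y s ω ∧ Y s ω ≤ Y t ω := by
      filter_upwards [hYpos s hs, hmono] with ω h1 h2
      exact ⟨h1, h2 hst.le⟩
    -- integrability of the three integrands
    have ht2β : Integrable (fun ω => Y t ω ^ (2 * β)) μ := hint_rpow t (2 * β) ht0 h2β
    have hs2β : Integrable (fun ω => Y s ω ^ (2 * β)) μ := hint_rpow s (2 * β) hs h2β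
    have hD_int : Integrable (fun ω => (Y s ω) ^ β * (Y t ω) ^ β) μ := by
      refine Integrable.mono' ht2β
        (((hmeas s).pow_const β).mul ((hmeas t).pow_const β)).aestronglyMeasurable ?_
      filter_upwards [hae] with ω ⟨h1, h2⟩
      have hy : 0 < Y t ω := lt_of_lt_of_le h1 h2
      rw [Real.norm_eq_abs, abs_of_nonneg (mul_nonneg (rpow_nonneg h1.le _) (rpow_nonneg hy.le _))]
      calc (Y s ω) ^ β * (Y t ω) ^ β ≤ (Y t ω) ^ β * (Y t ω) ^ β :=
            mul_le_mul_of_nonneg_right (rpow_le_rpow h1.le h2 hβ0.le) (rpow_nonneg hy.le _)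
        _ = (Y t ω) ^ (2 * β) := by rw [← rpow_add hy]; ring_nf
    have hf_asm : AEStronglyMeasurable
        (fun ω => (Y t ω) ^ (2 * β) * incBeta β (1 + β) (Y s ω / Y t ω)) μ := by
      refine AEStronglyMeasurable.congr (f := fun ω =>
        (Y t ω) ^ (2 * β) * incBeta β (1 + β) (max 0 (min 1 (Y s ω / Y t ω)))) ?_ ?_
      · exact (((hmeas t).pow_const _).mul
          (hG_cont.measurable.comp ((hmeas s).div (hmeas t)))).aestronglyMeasurable
      · filter_upwards [hae] with ω ⟨h1, h2⟩
        have hy : 0 < Y t ω := lt_of_lt_of_le h1 h2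
        have hr0 : 0 ≤ Y s ω / Y t ω := by positivity
        have hr1 : Y s ω / Y t ω ≤ 1 := (div_le_one hy).mpr h2
        rw [min_eq_right hr1, max_eq_right hr0]
    have hf_int : Integrable
        (fun ω => (Y t ω) ^ (2 * β) * incBeta β (1 + β) (Y s ω / Y t ω)) μ := by
      refine Integrable.mono' (ht2β.const_mul β⁻¹) hf_asm ?_
      filter_upwards [hae] with ω ⟨h1, h2⟩
      have hy : 0 < Y t ω := lt_of_lt_of_le h1 h2
      have hk := key_pointwise hβ0 hβ1 h1 h2
      have hnn : 0 ≤ (Y t ω) ^ (2 * β) * incBeta β (1 + β) (Y s ω / Y t ω) := by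
        refine mul_nonneg (rpow_nonneg hy.le _) (incBeta_nonneg hβ0 (by positivity)
          ((div_le_one hy).mpr h2))
      rw [Real.norm_eq_abs, abs_of_nonneg hnn]
      have hub : β * ((Y t ω) ^ (2 * β) * incBeta β (1 + β) (Y s ω / Y t ω)) ≤
          (Y t ω) ^ (2 * β) := by
        refine hk.2.trans ?_
        calc (Y s ω) ^ β * (Y t ω) ^ β ≤ (Y t ω) ^ β * (Y t ω) ^ β :=
              mul_le_mul_of_nonneg_right (rpow_le_rpow h1.le h2 hβ0.le) (rpow_nonneg hy.le _)
          _ = (Y t ω) ^ (2 * β) := by rw [← rpow_add hy]; ring_nf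
      calc (Y t ω) ^ (2 * β) * incBeta β (1 + β) (Y s ω / Y t ω)
          = β⁻¹ * (β * ((Y t ω) ^ (2 * β) * incBeta β (1 + β) (Y s ω / Y t ω))) := by
            field_simp
        _ ≤ β⁻¹ * (Y t ω) ^ (2 * β) := by
            exact mul_le_mul_of_nonneg_left hub (by positivity)
    constructor
    · -- lower bound for D t
      have habs : Measurable (fun z : ℝ => |z| ^ β) := (measurable_abs).pow_const β
      have hIF : IndepFun (fun ω => |Y s ω| ^ β) (fun ω => |Y t ω - Y s ω| ^ β) μ :=
        (hindep s t hs.le hst.le).comp habs habs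
      have hprod := hIF.integral_fun_mul_eq_mul_integral
        (habs.comp (hmeas s)).aestronglyMeasurable
        (habs.comp ((hmeas t).sub (hmeas s))).aestronglyMeasurable
      have hprod' : ∫ ω, |Y s ω| ^ β * |Y t ω - Y s ω| ^ β ∂μ =
          (∫ ω, |Y s ω| ^ β ∂μ) * ∫ ω, |Y t ω - Y s ω| ^ β ∂μ := by
        simpa using hprod
      have hstep1 : ∫ ω, |Y s ω| ^ β * |Y t ω - Y s ω| ^ β ∂μ ≤ D t := by
        refine integral_mono_of_nonneg
          (ae_of_all _ fun ω => mul_nonneg (rpow_nonneg (abs_nonneg _) _)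
            (rpow_nonneg (abs_nonneg _) _)) hD_int ?_
        filter_upwards [hae] with ω ⟨h1, h2⟩
        have hy : 0 < Y t ω := lt_of_lt_of_le h1 h2
        rw [abs_of_pos h1, abs_of_nonneg (by linarith : (0:ℝ) ≤ Y t ω - Y s ω)]
        exact mul_le_mul_of_nonneg_left
          (rpow_le_rpow (by linarith) (by linarith) hβ0.le) (rpow_nonneg h1.le _)
      have hXs : ∫ ω, |Y s ω| ^ β ∂μ = Es := by
        rw [hEs]
        refine integral_congr_ae ?_
        filter_upwards [hYpos s hs] with ω h1
        rw [abs_of_pos h1]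
      have hXts : ∫ ω, |Y t ω - Y s ω| ^ β ∂μ = ∫ x, x ^ β ∂(gammaMeasure (p * (t - s)) α) := by
        have he : ∫ ω, |Y t ω - Y s ω| ^ β ∂μ = ∫ ω, (Y t ω - Y s ω) ^ β ∂μ := by
          refine integral_congr_ae ?_
          filter_upwards [hmono] with ω h2
          rw [abs_of_nonneg (by linarith [h2 hst.le] : (0:ℝ) ≤ Y t ω - Y s ω)]
        rw [he, ← integral_map (φ := fun ω => Y t ω - Y s ω) ((hmeas t).sub (hmeas s)).aemeasurable
          ((measurable_id'.pow_const β).aestronglyMeasurable),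
          hstat s t hs.le hst.le, hlaw (t - s) hts]
      have hlb := gamma_moment_lb hβ0 hα ha16
      have hDlb : Es * ((p * (t - s) / (2 * α)) ^ β / 2) ≤ D t := by
        calc Es * ((p * (t - s) / (2 * α)) ^ β / 2)
            ≤ Es * ∫ x, x ^ β ∂(gammaMeasure (p * (t - s)) α) :=
              mul_le_mul_of_nonneg_left hlb hEs_pos.le
          _ = ∫ ω, |Y s ω| ^ β * |Y t ω - Y s ω| ^ β ∂μ := by rw [hprod', hXs, hXts]
          _ ≤ D t := hstep1
      have hpos : 0 < Es * ((p * (t - s) / (2 * α)) ^ β / 2) := by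
        have : (0:ℝ) < p * (t - s) / (2 * α) := by positivity
        have := rpow_pos_of_pos this β
        positivity
      exact ⟨lt_of_lt_of_le hpos hDlb, hDlb⟩
    · -- two-sided bound for β * N t
      have hβN : β * N t = ∫ ω, β * ((Y t ω) ^ (2 * β) * incBeta β (1 + β) (Y s ω / Y t ω)) ∂μ := by
        rw [hN, integral_const_mul]
      constructor
      · have hCint : Integrable (fun ω => Y s ω ^ (2 * β) / 2) μ := hs2β.div_const 2
        have hsub : D t - C / 2 =
            ∫ ω, ((Y s ω) ^ β * (Y t ω) ^ β - Y s ω ^ (2 * β) / 2) ∂μ := by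
          rw [integral_sub hD_int hCint, hD, hC, integral_div]
        rw [hsub, hβN]
        refine integral_mono_ae (hD_int.sub hCint) (hf_int.const_mul β) ?_
        filter_upwards [hae] with ω ⟨h1, h2⟩
        exact (key_pointwise hβ0 hβ1 h1 h2).1
      · rw [hβN]
        refine integral_mono_ae (hf_int.const_mul β) hD_int ?_
        filter_upwards [hae] with ω ⟨h1, h2⟩
        exact (key_pointwise hβ0 hβ1 h1 h2).2
  -- the lower bound tends to infinity
  have hLBtop : Tendsto (fun t : ℝ => Es * ((p * (t - s) / (2 * α)) ^ β / 2)) atTop atTop := by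
    have h1 : Tendsto (fun t : ℝ => p * (t - s) / (2 * α)) atTop atTop := by
      refine Tendsto.atTop_div_const (by positivity) ?_
      refine Tendsto.const_mul_atTop hp ?_
      exact (tendsto_atTop_add_const_right atTop (-s) tendsto_id).congr (fun x => by simp [sub_eq_add_neg])
    have h2 : Tendsto (fun t : ℝ => (p * (t - s) / (2 * α)) ^ β) atTop atTop :=
      (tendsto_rpow_atTop hβ0).comp h1
    exact Tendsto.const_mul_atTop hEs_pos (h2.atTop_div_const two_pos)
  have hDtop : Tendsto D atTop atTop := by
    refine tendsto_atTop_mono' atTop ?_ hLBtop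
    filter_upwards [eventually_ge_atTop (s + 16 / p)] with t ht
    exact ((key t ht).1).2
  have hterm : Tendsto (fun t => C / 2 / D t) atTop (nhds 0) :=
    Tendsto.div_atTop tendsto_const_nhds hDtop
  have hlow : Tendsto (fun t => 1 - C / 2 / D t) atTop (nhds 1) := by
    have := tendsto_const_nhds (α := ℝ) (x := (1:ℝ)) (f := atTop) |>.sub hterm
    simpa using this
  refine tendsto_of_tendsto_of_tendsto_of_le_of_le' hlow tendsto_const_nhds ?_ ?_
  · filter_upwards [eventually_ge_atTop (s + 16 / p)] with t ht
    obtain ⟨⟨hDpos, _⟩, ⟨hlb, _⟩⟩ := key t ht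
    have : 1 - C / 2 / D t = (D t - C / 2) / D t := by
      field_simp
    rw [this]
    exact (div_le_div_iff_of_pos_right hDpos).mpr hlb
  · filter_upwards [eventually_ge_atTop (s + 16 / p)] with t ht
    obtain ⟨⟨hDpos, _⟩, ⟨_, hub⟩⟩ := key t ht
    exact (div_le_one hDpos).mpr hub
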